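/- For every n ≥ 4 there exists a graph G of diameter 2 on n' = 2^k + k − 1 vertices with centroidal dimension exactly k, for each k ≥ 4. Concretely, the graph with vertex set B ∪ S where |B| = k, B induces a graph in which every vertex has both a neighbour and a non-neighbour in B, S is a clique of size 2^k − 1, and the vertices of S have pairwise distinct nonempty neighbourhoods in B, has diameter 2 and admits B as a centroidal locating set. -/

import Mathlib

open SimpleGraph

/-- A set `B` is a centroidal locating set of `G` if every pair of distinct vertices is
distinguished by the relative distances to two vertices of `B`. -/
def CentroidalLocating {V : Type*} (G : SimpleGraph V) (B : Set V) : Prop :=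
  ∀ ⦃x y : V⦄, x ≠ y → ∃ b1 ∈ B, ∃ b2 ∈ B,
    (G.dist x b1 ≤ G.dist x b2 ∧ G.dist y b2 < G.dist y b1) ∨
    (G.dist y b1 ≤ G.dist y b2 ∧ G.dist x b2 < G.dist x b1)

/-- The centroidal dimension: minimum size of a centroidal locating set. -/
noncomputable def CD {V : Type*} (G : SimpleGraph V) : ℕ :=
  sInf {k | ∃ B : Set V, B.ncard = k ∧ CentroidalLocating G B}

/-- counting lemma: any centroidal locating set in a connected graph of diameter ≤ 2
bounds the number of vertices. -/
lemma card_le_of_CL {V : Type*} [Fintype V] [DecidableEq V] (G : SimpleGraph V)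
    (hc : G.Connected) (hd : ∀ u v : V, G.dist u v ≤ 2) (B : Finset V)
    (hB : CentroidalLocating G ↑B) :
    Fintype.card V ≤ 2 ^ B.card + B.card := by
  classical
  set f : V → Option V × Finset V := fun x =>
    if x ∈ B then (some x, ∅) else (none, B.filter (fun b => G.Adj x b)) with hf
  have hdist : ∀ x : V, x ∉ B → ∀ b ∈ B, G.dist x b = if G.Adj x b then 1 else 2 := by
    intro x hx b hb
    have hne : x ≠ b := fun h => hx (h ▸ hb)
    have h0 : G.dist x b ≠ 0 := by
      exact fun h => hne (hc.dist_eq_zero_iff.mp h)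
    by_cases ha : G.Adj x b
    · simp [ha, dist_eq_one_iff_adj.mpr ha]
    · have h1 : G.dist x b ≠ 1 := fun h => ha (dist_eq_one_iff_adj.mp h)
      have := hd x b
      simp only [ha, if_false]
      omega
  have hinj : Set.InjOn f (Finset.univ : Finset V) := by
    intro x _ y _ hxy
    by_contra hne
    by_cases hxB : x ∈ B
    · by_cases hyB : y ∈ B
      · simp only [hf, hxB, hyB, if_pos, Prod.mk.injEq] at hxy
        exact hne (Option.some_injective _ hxy.1)
      · simp [hf, hxB, hyB] at hxy
    · by_cases hyB : y ∈ B
      · simp [hf, hxB, hyB] at hxy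
      · simp only [hf, hxB, hyB, if_neg, not_false_iff, Prod.mk.injEq] at hxy
        have hfilter := hxy.2
        have hsame : ∀ b ∈ B, G.dist x b = G.dist y b := by
          intro b hb
          have hx' := hdist x hxB b hb
          have hy' := hdist y hyB b hb
          have : G.Adj x b ↔ G.Adj y b := by
            constructor
            · intro h
              have : b ∈ B.filter (fun b => G.Adj x b) := Finset.mem_filter.mpr ⟨hb, h⟩
              rw [hfilter] at this
              exact (Finset.mem_filter.mp this).2
            · intro h
              have : b ∈ B.filter (fun b => G.Adj y b) := Finset.mem_filter.mpr ⟨hb, h⟩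
              rw [← hfilter] at this
              exact (Finset.mem_filter.mp this).2
          by_cases ha : G.Adj x b
          · rw [hx', hy', if_pos ha, if_pos (this.mp ha)]
          · rw [hx', hy', if_neg ha, if_neg (fun h => ha (this.mpr h))]
        obtain ⟨b1, hb1, b2, hb2, hcase⟩ := hB hne
        rcases hcase with ⟨h1, h2⟩ | ⟨h1, h2⟩
        · rw [← hsame b1 hb1, ← hsame b2 hb2] at h2; omega
        · rw [hsame b1 hb1, hsame b2 hb2] at h2; omega
  have himg : ∀ x ∈ (Finset.univ : Finset V),
      f x ∈ ({none} ×ˢ B.powerset : Finset (Option V × Finset V)) ∪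
        B.image (fun b => (some b, (∅ : Finset V))) := by
    intro x _
    by_cases hxB : x ∈ B
    · simp only [hf, hxB, if_pos]
      exact Finset.mem_union_right _ (Finset.mem_image.mpr ⟨x, hxB, rfl⟩)
    · simp only [hf, hxB, if_neg, not_false_iff]
      apply Finset.mem_union_left
      rw [Finset.mem_product]
      exact ⟨Finset.mem_singleton_self _, Finset.mem_powerset.mpr (Finset.filter_subset _ _)⟩
  calc Fintype.card V = (Finset.univ : Finset V).card := (Finset.card_univ).symm
    _ ≤ _ := Finset.card_le_card_of_injOn f himg hinj
    _ ≤ ({none} ×ˢ B.powerset : Finset (Option V × Finset V)).card +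
        (B.image (fun b => (some b, (∅ : Finset V)))).card := Finset.card_union_le _ _
    _ ≤ 2 ^ B.card + B.card := by
        gcongr
        · rw [Finset.card_product, Finset.card_singleton, one_mul, Finset.card_powerset]
        · exact Finset.card_image_le

section Construction

/-- Vertex type: `B = Fin k` together with the nonempty subsets of `Fin k`. -/
abbrev Vk (k : ℕ) := Fin k ⊕ {A : Finset (Fin k) // A.Nonempty}

/-- The extremal graph. -/
def Gk (k : ℕ) : SimpleGraph (Vk k) where
  Adj x y := match x, y with
    | .inl i, .inl j => i.val % 2 ≠ j.val % 2
    | .inl i, .inr A => i ∈ A.val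
    | .inr A, .inl i => i ∈ A.val
    | .inr A, .inr C => A ≠ C
  symm := by
    constructor
    rintro (i | A) (j | C) h
    · exact fun h' => h h'.symm
    · exact h
    · exact h
    · exact h.symm
  loopless := by
    constructor
    rintro (i | A) h
    · exact h rfl
    · exact h rfl

variable {k : ℕ}

/-- the hub vertex, adjacent to everything else. -/
def hub (hk : 4 ≤ k) : Vk k := Sum.inr ⟨Finset.univ, ⟨⟨0, by omega⟩, Finset.mem_univ _⟩⟩

lemma adj_hub (hk : 4 ≤ k) (v : Vk k) (hv : v ≠ hub hk) : (Gk k).Adj v (hub hk) := by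
  rcases v with i | A
  · show i ∈ Finset.univ
    exact Finset.mem_univ i
  · show A ≠ _
    exact fun h => hv (congrArg Sum.inr h)

lemma Gk_connected (hk : 4 ≤ k) : (Gk k).Connected := by
  rw [connected_iff_exists_forall_reachable]
  refine ⟨hub hk, fun v => ?_⟩
  by_cases hv : v = hub hk
  · exact hv ▸ Reachable.refl _
  · exact (adj_hub hk v hv).symm.reachable

lemma edist_hub_le (hk : 4 ≤ k) (w : Vk k) : (Gk k).edist w (hub hk) ≤ 1 := by
  by_cases hw : w = hub hk
  · rw [hw, SimpleGraph.edist_self]; exact zero_le_one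
  · exact le_of_eq (edist_eq_one_iff_adj.mpr (adj_hub hk w hw))

lemma Gk_edist_le (hk : 4 ≤ k) (u v : Vk k) : (Gk k).edist u v ≤ 2 := by
  calc (Gk k).edist u v ≤ (Gk k).edist u (hub hk) + (Gk k).edist (hub hk) v :=
        SimpleGraph.edist_triangle
    _ ≤ 1 + 1 := by
        have h1 := edist_hub_le hk u
        have h2 : (Gk k).edist (hub hk) v ≤ 1 := by
          rw [SimpleGraph.edist_comm]; exact edist_hub_le hk v
        exact add_le_add h1 h2
    _ = 2 := one_add_one_eq_two

lemma Gk_dist_le (hk : 4 ≤ k) (u v : Vk k) : (Gk k).dist u v ≤ 2 := by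
  have := Gk_edist_le hk u v
  have h := ENat.toNat_le_toNat this (by simp)
  simpa [SimpleGraph.dist] using h

lemma Gk_dist_adj {u v : Vk k} (ha : (Gk k).Adj u v) : (Gk k).dist u v = 1 :=
  dist_eq_one_iff_adj.mpr ha

lemma Gk_dist_not_adj (hk : 4 ≤ k) {u v : Vk k} (huv : u ≠ v) (ha : ¬(Gk k).Adj u v) :
    (Gk k).dist u v = 2 := by
  have h0 : (Gk k).dist u v ≠ 0 := fun h => huv ((Gk_connected hk).dist_eq_zero_iff.mp h)
  have h1 : (Gk k).dist u v ≠ 1 := fun h => ha (dist_eq_one_iff_adj.mp h)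
  have := Gk_dist_le hk u v
  omega

lemma Gk_diam (hk : 4 ≤ k) : (Gk k).diam = 2 := by
  have hediam : (Gk k).ediam = 2 := by
    apply le_antisymm (ediam_le_of_edist_le (Gk_edist_le hk))
    have huv : ((⟨0, by omega⟩ : Fin k) : Fin k) ≠ ⟨2, by omega⟩ := by
      intro h; simpa using congrArg Fin.val h
    have hne : (Sum.inl ⟨0, by omega⟩ : Vk k) ≠ Sum.inl ⟨2, by omega⟩ := by
      intro h; exact huv (Sum.inl_injective h)
    have hna : ¬(Gk k).Adj (Sum.inl ⟨0, by omega⟩) (Sum.inl ⟨2, by omega⟩) := by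
      show ¬(0 % 2 ≠ 2 % 2); omega
    have h0 : (Gk k).edist (Sum.inl ⟨0, by omega⟩) (Sum.inl ⟨2, by omega⟩) ≠ 0 :=
      edist_eq_zero_iff.ne.mpr hne
    have h1 : (Gk k).edist (Sum.inl ⟨0, by omega⟩) (Sum.inl ⟨2, by omega⟩) ≠ 1 :=
      fun h => hna (edist_eq_one_iff_adj.mp h)
    calc (2 : ℕ∞) = 1 + 1 := one_add_one_eq_two.symm
      _ ≤ (Gk k).edist (Sum.inl ⟨0, by omega⟩) (Sum.inl ⟨2, by omega⟩) := by
          rw [ENat.add_one_le_iff (by simp)]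
          exact lt_of_le_of_ne (ENat.one_le_iff_ne_zero.mpr h0) (Ne.symm h1)
      _ ≤ (Gk k).ediam := edist_le_ediam
  rw [SimpleGraph.diam, hediam]
  rfl

end Construction

section Locating

variable {k : ℕ}

lemma Gk_CL (hk : 4 ≤ k) : CentroidalLocating (Gk k) (Set.range Sum.inl) := by
  classical
  have dpos : ∀ {x y : Vk k}, x ≠ y → 0 < (Gk k).dist x y := fun {x y} h =>
    Nat.pos_of_ne_zero (fun h0 => h ((Gk_connected hk).dist_eq_zero_iff.mp h0))
  have dri1 : ∀ (A : {A : Finset (Fin k) // A.Nonempty}) (i : Fin k), i ∈ A.val →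
      (Gk k).dist (Sum.inr A) (Sum.inl i) = 1 := fun A i h => Gk_dist_adj h
  have dri2 : ∀ (A : {A : Finset (Fin k) // A.Nonempty}) (i : Fin k), i ∉ A.val →
      (Gk k).dist (Sum.inr A) (Sum.inl i) = 2 := fun A i h =>
    Gk_dist_not_adj hk (by simp) h
  have dll1 : ∀ (i j : Fin k), i.val % 2 ≠ j.val % 2 →
      (Gk k).dist (Sum.inl i) (Sum.inl j) = 1 := fun i j h => Gk_dist_adj h
  have dll2 : ∀ (i j : Fin k), i ≠ j → i.val % 2 = j.val % 2 →
      (Gk k).dist (Sum.inl i) (Sum.inl j) = 2 := fun i j hne h =>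
    Gk_dist_not_adj hk (fun hc => hne (Sum.inl_injective hc)) (fun hc => hc h)
  have hmem : ∀ i : Fin k, (Sum.inl i : Vk k) ∈ Set.range (Sum.inl : Fin k → Vk k) :=
    fun i => ⟨i, rfl⟩
  -- main case: x = inl i, y = inr A
  have case2 : ∀ (i : Fin k) (A : {A : Finset (Fin k) // A.Nonempty}),
      ∃ b1 ∈ Set.range (Sum.inl : Fin k → Vk k), ∃ b2 ∈ Set.range Sum.inl,
      ((Gk k).dist (Sum.inl i) b1 ≤ (Gk k).dist (Sum.inl i) b2 ∧
        (Gk k).dist (Sum.inr A) b2 < (Gk k).dist (Sum.inr A) b1) ∨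
      ((Gk k).dist (Sum.inr A) b1 ≤ (Gk k).dist (Sum.inr A) b2 ∧
        (Gk k).dist (Sum.inl i) b2 < (Gk k).dist (Sum.inl i) b1) := by
    intro i A
    by_cases hj : ∃ j : Fin k, j ≠ i ∧
        (Gk k).dist (Sum.inr A) (Sum.inl j) ≤ (Gk k).dist (Sum.inr A) (Sum.inl i)
    · obtain ⟨j, hji, hle⟩ := hj
      refine ⟨Sum.inl j, hmem j, Sum.inl i, hmem i, Or.inr ⟨hle, ?_⟩⟩
      rw [SimpleGraph.dist_self]
      exact dpos (fun h => hji.symm (Sum.inl_injective h))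
    · push_neg at hj
      set j1 : Fin k := ⟨if i.val < 2 then i.val + 2 else i.val - 2, by split <;> omega⟩ with hj1
      set j2 : Fin k := ⟨if i.val % 2 = 0 then 1 else 0, by split <;> omega⟩ with hj2
      have hj1i : j1 ≠ i := by
        refine Fin.ne_of_val_ne ?_
        simp only [hj1]; split <;> omega
      have hj1p : j1.val % 2 = i.val % 2 := by simp only [hj1]; split <;> omega
      have hj2p : j2.val % 2 ≠ i.val % 2 := by simp only [hj2]; split <;> omega
      have hj2i : j2 ≠ i := fun h => hj2p (by rw [h])
      have hyi : 1 ≤ (Gk k).dist (Sum.inr A) (Sum.inl i) := dpos (by simp)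
      have hy1 : (Gk k).dist (Sum.inr A) (Sum.inl j1) = 2 := by
        have := hj j1 hj1i
        have := Gk_dist_le hk (Sum.inr A) (Sum.inl j1)
        omega
      have hy2 : (Gk k).dist (Sum.inr A) (Sum.inl j2) = 2 := by
        have := hj j2 hj2i
        have := Gk_dist_le hk (Sum.inr A) (Sum.inl j2)
        omega
      refine ⟨Sum.inl j1, hmem j1, Sum.inl j2, hmem j2, Or.inr ⟨?_, ?_⟩⟩
      · rw [hy1, hy2]
      · rw [dll1 i j2 (fun h => hj2p h.symm), dll2 i j1 (fun h => hj1i (h.symm)) hj1p.symm]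
        omega
  intro x y hxy
  rcases x with i | A <;> rcases y with j | C
  · -- inl inl
    refine ⟨Sum.inl i, hmem i, Sum.inl j, hmem j, Or.inl ⟨?_, ?_⟩⟩
    · rw [SimpleGraph.dist_self]; omega
    · rw [SimpleGraph.dist_self]
      exact dpos (fun h => hxy (congrArg Sum.inl (Sum.inl_injective h)).symm)
  · exact case2 i C
  · obtain ⟨b1, h1, b2, h2, h⟩ := case2 j A
    exact ⟨b1, h1, b2, h2, h.symm⟩
  · -- inr inr
    have hne : A.val ≠ C.val := fun h => hxy (congrArg Sum.inr (Subtype.ext h))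
    have aux : ∀ (A C : {A : Finset (Fin k) // A.Nonempty}), (∃ i ∈ A.val, i ∉ C.val) →
        ∃ b1 ∈ Set.range (Sum.inl : Fin k → Vk k), ∃ b2 ∈ Set.range Sum.inl,
        ((Gk k).dist (Sum.inr A) b1 ≤ (Gk k).dist (Sum.inr A) b2 ∧
          (Gk k).dist (Sum.inr C) b2 < (Gk k).dist (Sum.inr C) b1) := by
      rintro A C ⟨i, hiA, hiC⟩
      obtain ⟨j, hjC⟩ := C.2
      refine ⟨Sum.inl i, hmem i, Sum.inl j, hmem j, ?_, ?_⟩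
      · rw [dri1 A i hiA]
        exact dpos (by simp)
      · rw [dri1 C j hjC, dri2 C i hiC]
        omega
    by_cases hAC : ∃ i ∈ A.val, i ∉ C.val
    · obtain ⟨b1, h1, b2, h2, h⟩ := aux A C hAC
      exact ⟨b1, h1, b2, h2, Or.inl h⟩
    · push_neg at hAC
      have : ∃ i ∈ C.val, i ∉ A.val := by
        by_contra hCA
        push_neg at hCA
        exact hne (Finset.Subset.antisymm hAC hCA)
      obtain ⟨b1, h1, b2, h2, h⟩ := aux C A this
      exact ⟨b1, h1, b2, h2, Or.inr h⟩

end Locating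

lemma card_Vk {k : ℕ} (hk : 4 ≤ k) : Fintype.card (Vk k) = 2 ^ k + k - 1 := by
  classical
  have h1 : Fintype.card {A : Finset (Fin k) // A.Nonempty} = 2 ^ k - 1 := by
    have he : Fintype.card {A : Finset (Fin k) // A.Nonempty} =
        Fintype.card {A : Finset (Fin k) // ¬ A = ∅} := by
      refine Fintype.card_congr (Equiv.subtypeEquivRight fun A => ?_)
      simp [Finset.nonempty_iff_ne_empty]
    rw [he, Fintype.card_subtype_compl, Fintype.card_finset, Fintype.card_fin,
      Fintype.card_subtype_eq]
  rw [Fintype.card_sum, Fintype.card_fin, h1]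
  have : 1 ≤ 2 ^ k := Nat.one_le_two_pow
  omega

lemma ncard_range_inl {k : ℕ} : (Set.range (Sum.inl : Fin k → Vk k)).ncard = k := by
  rw [← Set.image_univ, Set.ncard_image_of_injective _ Sum.inl_injective, Set.ncard_univ,
    Nat.card_eq_fintype_card, Fintype.card_fin]

lemma CD_Gk {k : ℕ} (hk : 4 ≤ k) : CD (Gk k) = k := by
  classical
  have hmem : k ∈ {m | ∃ B : Set (Vk k), B.ncard = m ∧ CentroidalLocating (Gk k) B} :=
    ⟨Set.range Sum.inl, ncard_range_inl, Gk_CL hk⟩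
  apply le_antisymm (Nat.sInf_le hmem)
  apply le_csInf ⟨k, hmem⟩
  rintro m ⟨B, hBcard, hBCL⟩
  have hfin : B.Finite := Set.toFinite B
  have hcard : hfin.toFinset.card = m := by
    rw [← Set.ncard_eq_toFinset_card B hfin, hBcard]
  have hCL' : CentroidalLocating (Gk k) ↑hfin.toFinset := by
    rwa [Set.Finite.coe_toFinset]
  have hle := card_le_of_CL (Gk k) (Gk_connected hk) (Gk_dist_le hk) hfin.toFinset hCL'
  rw [card_Vk hk, hcard] at hle
  by_contra hlt
  push_neg at hlt
  have h1 : 2 ^ m ≤ 2 ^ (k - 1) := Nat.pow_le_pow_right (by norm_num) (by omega)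
  have h2 : 2 ^ (k - 1) * 2 = 2 ^ k := by
    rw [← pow_succ]
    congr 1
    omega
  have h3 : 1 ≤ 2 ^ (k - 1) := Nat.one_le_two_pow
  omega

theorem exists_extremal_diam_two (k : ℕ) (hk : 4 ≤ k) :
    ∃ (V : Type) (_ : Fintype V) (G : SimpleGraph V),
      G.Connected ∧ G.diam = 2 ∧ Fintype.card V = 2 ^ k + k - 1 ∧ CD G = k := by
  exact ⟨Vk k, inferInstance, Gk k, Gk_connected hk, Gk_diam hk, card_Vk hk, CD_Gk hk⟩
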